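/- For all ordinals α, β < ε_{Ω+1}: k(α ⊕ β) ≤ k(α) ⊕ k(β), and moreover k(α) ≤ k(α ⊕ β) and k(β) ≤ k(α ⊕ β). -/

import Mathlib

/-- `Ω`, the first uncountable ordinal `ω₁`. -/
noncomputable def Omega1 : Ordinal.{0} := (Cardinal.aleph 1).ord

/-- `KMem β α` expresses `β ∈ K(α)`, where `K(0) = {0}` and, for
`α = Ω^{α₁}·β₁ + … + Ω^{αₙ}·βₙ` in base-`Ω` Cantor normal form,
`K(α) = {β₁,…,βₙ} ∪ K(α₁) ∪ … ∪ K(αₙ)`. -/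
inductive KMem : Ordinal.{0} → Ordinal.{0} → Prop
  | zero : KMem 0 0
  | coeff {α e c : Ordinal.{0}} : (e, c) ∈ Ordinal.CNF Omega1 α → KMem c α
  | expo {α e c β : Ordinal.{0}} : (e, c) ∈ Ordinal.CNF Omega1 α → KMem β e → KMem β α

/-- `k(α) = max K(α)` (as a supremum; `K(α)` is finite for `α < ε_{Ω+1}`). -/
noncomputable def kMax (α : Ordinal.{0}) : Ordinal.{0} := sSup {β | KMem β α}

/-- Membership in `P`, the class of additively closed ordinals `{ω^ξ : ξ ∈ On}`. -/
def AddClosed (ζ : Ordinal.{0}) : Prop := ∃ ξ : Ordinal.{0}, ζ = Ordinal.omega0 ^ ξ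

/-- The collapsing function `ϑ`: `ϑ(α)` is the least `ζ ∈ P` such that `k(α) < ζ` and
for all `β < α` with `k(β) < ζ` one has `ϑ(β) < ζ`. -/
noncomputable def theta : Ordinal.{0} → Ordinal.{0} :=
  Ordinal.lt_wf.fix (C := fun _ => Ordinal.{0}) fun α IH =>
    sInf {ζ : Ordinal.{0} | AddClosed ζ ∧ kMax α < ζ ∧
      ∀ (β : Ordinal.{0}) (h : β < α), kMax β < ζ → IH β h < ζ}

/-- `ε_{Ω+1}`, the least epsilon number above `Ω`. -/
noncomputable def epsOmega1 : Ordinal.{0} :=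
  Ordinal.nfp (fun a => Ordinal.omega0 ^ a) (Omega1 + 1)

/-- The tower `Ω_n[1]`: `Ω_0[1] = 1` and `Ω_{n+1}[1] = Ω ^ Ω_n[1]`. -/
noncomputable def OmegaTower : ℕ → Ordinal.{0}
  | 0 => 1
  | nn + 1 => Omega1 ^ OmegaTower nn

/-- The Howard–Bachmann ordinal `ϑ(ε_{Ω+1}) = sup_{n<ω} ϑ(Ω_n[1])`. -/
noncomputable def HowardBachmann : Ordinal.{0} := ⨆ nn : ℕ, theta (OmegaTower nn)

universe u

/-- Natural (Hessenberg) addition, as `Ordinal.nadd` in the older Mathlib. -/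
noncomputable def Ordinal.nadd (a b : Ordinal.{u}) : Ordinal.{u} :=
  max (⨆ x : Set.Iio a, Order.succ (Ordinal.nadd x.1 b))
    (⨆ x : Set.Iio b, Order.succ (Ordinal.nadd a x.1))
termination_by (a, b)
decreasing_by
  · exact Prod.Lex.left _ _ x.2
  · exact Prod.Lex.right _ x.2

namespace NaturalOps
infixl:65 " ♯ " => Ordinal.nadd
end NaturalOps

namespace Ordinal
open NaturalOps

theorem nadd_def (a b : Ordinal.{u}) : a ♯ b =
    max (⨆ x : Set.Iio a, Order.succ (x.1 ♯ b)) (⨆ x : Set.Iio b, Order.succ (a ♯ x.1)) := by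
  rw [Ordinal.nadd]

theorem nadd_le_iff {a b c : Ordinal.{u}} :
    a ♯ b ≤ c ↔ (∀ a' < a, a' ♯ b < c) ∧ (∀ b' < b, a ♯ b' < c) := by
  rw [nadd_def, max_le_iff, Ordinal.iSup_le_iff, Ordinal.iSup_le_iff]
  simp only [Order.succ_le_iff, Subtype.forall, Set.mem_Iio]

theorem lt_nadd_iff {a b c : Ordinal.{u}} :
    a < b ♯ c ↔ (∃ b' < b, a ≤ b' ♯ c) ∨ (∃ c' < c, a ≤ b ♯ c') := by
  rw [nadd_def, lt_max_iff, Ordinal.lt_iSup_iff, Ordinal.lt_iSup_iff]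
  simp only [Order.lt_succ_iff, Subtype.exists, Set.mem_Iio, exists_prop]

theorem nadd_lt_nadd_right {a b : Ordinal.{u}} (h : a < b) (c : Ordinal.{u}) : a ♯ c < b ♯ c :=
  lt_nadd_iff.2 (Or.inl ⟨a, h, le_rfl⟩)

theorem nadd_lt_nadd_left {b c : Ordinal.{u}} (h : b < c) (a : Ordinal.{u}) : a ♯ b < a ♯ c :=
  lt_nadd_iff.2 (Or.inr ⟨b, h, le_rfl⟩)

theorem nadd_le_nadd_right {a b : Ordinal.{u}} (h : a ≤ b) (c : Ordinal.{u}) : a ♯ c ≤ b ♯ c := by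
  rcases h.lt_or_eq with h | rfl
  · exact (nadd_lt_nadd_right h c).le
  · exact le_rfl

theorem nadd_le_nadd_left {b c : Ordinal.{u}} (h : b ≤ c) (a : Ordinal.{u}) : a ♯ b ≤ a ♯ c := by
  rcases h.lt_or_eq with h | rfl
  · exact (nadd_lt_nadd_left h a).le
  · exact le_rfl

theorem nadd_le_nadd {a b c d : Ordinal.{u}} (h1 : a ≤ b) (h2 : c ≤ d) : a ♯ c ≤ b ♯ d :=
  (nadd_le_nadd_right h1 c).trans (nadd_le_nadd_left h2 b)

theorem nadd_lt_nadd_of_lt_of_le {a b c d : Ordinal.{u}} (h1 : a < b) (h2 : c ≤ d) :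
    a ♯ c < b ♯ d :=
  (nadd_lt_nadd_right h1 c).trans_le (nadd_le_nadd_left h2 b)

theorem nadd_lt_nadd_of_le_of_lt {a b c d : Ordinal.{u}} (h1 : a ≤ b) (h2 : c < d) :
    a ♯ c < b ♯ d :=
  (nadd_le_nadd_right h1 c).trans_lt (nadd_lt_nadd_left h2 b)

theorem nadd_comm : ∀ a b : Ordinal.{u}, a ♯ b = b ♯ a := by
  intro a
  induction a using Ordinal.induction with
  | _ a IHa =>
  intro b
  induction b using Ordinal.induction with
  | _ b IHb =>
  apply le_antisymm
  · rw [nadd_le_iff]; constructor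
    · intro a' ha'; rw [IHa a' ha' b]; exact nadd_lt_nadd_left ha' b
    · intro b' hb'; rw [IHb b' hb']; exact nadd_lt_nadd_right hb' a
  · rw [nadd_le_iff]; constructor
    · intro b' hb'; rw [← IHb b' hb']; exact nadd_lt_nadd_left hb' a
    · intro a' ha'; rw [← IHa a' ha' b]; exact nadd_lt_nadd_right ha' b

@[simp]
theorem nadd_zero : ∀ a : Ordinal.{u}, a ♯ 0 = a := by
  intro a
  induction a using Ordinal.induction with
  | _ a IH =>
  apply le_antisymm
  · rw [nadd_le_iff]
    exact ⟨fun a' ha' => by rw [IH a' ha']; exact ha',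
      fun b' hb' => absurd hb' (not_lt_of_ge zero_le)⟩
  · apply le_of_forall_lt
    intro x hx
    exact lt_nadd_iff.2 (Or.inl ⟨x, hx, (IH x hx).ge⟩)

@[simp]
theorem zero_nadd (a : Ordinal.{u}) : 0 ♯ a = a := by
  rw [nadd_comm, nadd_zero]

theorem le_self_nadd {a b : Ordinal.{u}} : a ≤ a ♯ b :=
  calc a = a ♯ 0 := (nadd_zero a).symm
    _ ≤ a ♯ b := nadd_le_nadd_left zero_le a

theorem le_nadd_self {a b : Ordinal.{u}} : a ≤ b ♯ a := by
  rw [nadd_comm]; exact le_self_nadd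

theorem nadd_succ : ∀ a b : Ordinal.{u}, a ♯ Order.succ b = Order.succ (a ♯ b) := by
  intro a
  induction a using Ordinal.induction with
  | _ a IH =>
  intro b
  apply le_antisymm
  · rw [nadd_le_iff]; constructor
    · intro a' ha'; rw [IH a' ha', Order.succ_lt_succ_iff]; exact nadd_lt_nadd_right ha' b
    · intro b' hb'; exact Order.lt_succ_iff.2 (nadd_le_nadd_left (Order.lt_succ_iff.1 hb') a)
  · exact Order.succ_le_of_lt (nadd_lt_nadd_left (Order.lt_succ b) a)

theorem nadd_nat (a : Ordinal.{u}) (n : ℕ) : a ♯ (n : Ordinal) = a + n := by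
  induction n with
  | zero => simp
  | succ n ih =>
    rw [Nat.cast_succ, ← add_assoc]
    simp only [Ordinal.add_one_eq_succ]
    rw [nadd_succ, ih]

end Ordinal

open Ordinal NaturalOps in
/-- Natural sum of decompositions along an ordinal `p` closed under natural addition. -/
theorem keyB_aux {p : Ordinal.{0}} (hcl : ∀ a b, a < p → b < p → a ♯ b < p) :
    ∀ c c' r r', r < p → r' < p →
      (p * c + r) ♯ (p * c' + r') = p * (c ♯ c') + (r ♯ r') := by
  suffices H : ∀ γ δ c c' r r', c ♯ c' = γ → r ♯ r' = δ → r < p → r' < p →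
      (p * c + r) ♯ (p * c' + r') = p * (c ♯ c') + (r ♯ r') from
    fun c c' r r' hr hr' => H _ _ c c' r r' rfl rfl hr hr'
  intro γ
  induction γ using Ordinal.induction with
  | _ γ IHγ =>
  intro δ
  induction δ using Ordinal.induction with
  | _ δ IHδ =>
  intro c c' r r' hγ hδ hr hr'
  have p0 : p ≠ 0 := ((zero_le : (0 : Ordinal) ≤ r).trans_lt hr).ne'
  subst hγ hδ
  apply le_antisymm
  · rw [nadd_le_iff]
    constructor
    · intro x hx
      rcases lt_or_ge x (p * c) with h | h
      · have hq : x / p < c := (Ordinal.div_lt p0).2 h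
        have hs : x % p < p := Ordinal.mod_lt x p0
        have hx2 : p * (x / p) + x % p = x := Ordinal.div_add_mod x p
        have e1 := IHγ _ (nadd_lt_nadd_right hq c') _ _ _ _ _ rfl rfl hs hr'
        rw [← hx2, e1]
        calc p * (x / p ♯ c') + (x % p ♯ r')
            < p * (x / p ♯ c') + p := add_lt_add_right (hcl _ _ hs hr') _
          _ = p * Order.succ (x / p ♯ c') := (Ordinal.mul_succ _ _).symm
          _ ≤ p * (c ♯ c') := mul_le_mul_right (Order.succ_le_of_lt (nadd_lt_nadd_right hq c')) p
          _ ≤ p * (c ♯ c') + (r ♯ r') := le_self_add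
      · have hx2 : p * c + (x - p * c) = x := Ordinal.add_sub_cancel_of_le h
        have hr₁ : x - p * c < r := by
          rw [← hx2] at hx; exact (add_lt_add_iff_left _).1 hx
        have e1 := IHδ _ (nadd_lt_nadd_right hr₁ r') c c' _ r' rfl rfl (hr₁.trans hr) hr'
        rw [← hx2, e1]
        exact add_lt_add_right (nadd_lt_nadd_right hr₁ r') _
    · intro y hy
      rcases lt_or_ge y (p * c') with h | h
      · have hq : y / p < c' := (Ordinal.div_lt p0).2 h
        have hs : y % p < p := Ordinal.mod_lt y p0
        have hy2 : p * (y / p) + y % p = y := Ordinal.div_add_mod y p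
        have e1 := IHγ _ (nadd_lt_nadd_left hq c) _ _ _ _ _ rfl rfl hr hs
        rw [← hy2, e1]
        calc p * (c ♯ y / p) + (r ♯ y % p)
            < p * (c ♯ y / p) + p := add_lt_add_right (hcl _ _ hr hs) _
          _ = p * Order.succ (c ♯ y / p) := (Ordinal.mul_succ _ _).symm
          _ ≤ p * (c ♯ c') := mul_le_mul_right (Order.succ_le_of_lt (nadd_lt_nadd_left hq c)) p
          _ ≤ p * (c ♯ c') + (r ♯ r') := le_self_add
      · have hy2 : p * c' + (y - p * c') = y := Ordinal.add_sub_cancel_of_le h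
        have hr₂ : y - p * c' < r' := by
          rw [← hy2] at hy; exact (add_lt_add_iff_left _).1 hy
        have e1 := IHδ _ (nadd_lt_nadd_left hr₂ r) c c' r _ rfl rfl hr (hr₂.trans hr')
        rw [← hy2, e1]
        exact add_lt_add_right (nadd_lt_nadd_left hr₂ r) _
  · apply le_of_forall_lt
    intro x hx
    rcases lt_or_ge x (p * (c ♯ c')) with h | h
    · have hq : x / p < c ♯ c' := (Ordinal.div_lt p0).2 h
      have hs : x % p < p := Ordinal.mod_lt x p0
      have hx2 : p * (x / p) + x % p = x := Ordinal.div_add_mod x p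
      rcases lt_nadd_iff.1 hq with ⟨c₁, hc₁, hq'⟩ | ⟨c₂, hc₂, hq'⟩
      · have e1 := IHγ _ (nadd_lt_nadd_right hc₁ c') _ c₁ c' _ r' rfl rfl hs hr'
        have : x ≤ (p * c₁ + x % p) ♯ (p * c' + r') := by
          calc x = p * (x / p) + x % p := hx2.symm
            _ ≤ p * (c₁ ♯ c') + (x % p ♯ r') :=
                add_le_add (mul_le_mul_right hq' p) le_self_nadd
            _ = (p * c₁ + x % p) ♯ (p * c' + r') := e1.symm
        apply this.trans_lt
        apply nadd_lt_nadd_of_lt_of_le _ le_rfl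
        calc p * c₁ + x % p < p * c₁ + p := add_lt_add_right hs _
          _ = p * Order.succ c₁ := (Ordinal.mul_succ _ _).symm
          _ ≤ p * c := mul_le_mul_right (Order.succ_le_of_lt hc₁) p
          _ ≤ p * c + r := le_self_add
      · have e1 := IHγ _ (nadd_lt_nadd_left hc₂ c) _ c c₂ r _ rfl rfl hr hs
        have : x ≤ (p * c + r) ♯ (p * c₂ + x % p) := by
          calc x = p * (x / p) + x % p := hx2.symm
            _ ≤ p * (c ♯ c₂) + (r ♯ x % p) :=
                add_le_add (mul_le_mul_right hq' p) le_nadd_self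
            _ = (p * c + r) ♯ (p * c₂ + x % p) := e1.symm
        apply this.trans_lt
        apply nadd_lt_nadd_of_le_of_lt le_rfl
        calc p * c₂ + x % p < p * c₂ + p := add_lt_add_right hs _
          _ = p * Order.succ c₂ := (Ordinal.mul_succ _ _).symm
          _ ≤ p * c' := mul_le_mul_right (Order.succ_le_of_lt hc₂) p
          _ ≤ p * c' + r' := le_self_add
    · have hx2 : p * (c ♯ c') + (x - p * (c ♯ c')) = x := Ordinal.add_sub_cancel_of_le h
      have ht : x - p * (c ♯ c') < r ♯ r' := by
        rw [← hx2] at hx; exact (add_lt_add_iff_left _).1 hx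
      rcases lt_nadd_iff.1 ht with ⟨r₁, hr₁, ht'⟩ | ⟨r₂, hr₂, ht'⟩
      · have e1 := IHδ _ (nadd_lt_nadd_right hr₁ r') c c' r₁ r' rfl rfl (hr₁.trans hr) hr'
        have : x ≤ (p * c + r₁) ♯ (p * c' + r') := by
          calc x = p * (c ♯ c') + (x - p * (c ♯ c')) := hx2.symm
            _ ≤ p * (c ♯ c') + (r₁ ♯ r') := add_le_add le_rfl ht'
            _ = (p * c + r₁) ♯ (p * c' + r') := e1.symm
        exact this.trans_lt (nadd_lt_nadd_of_lt_of_le (add_lt_add_right hr₁ _) le_rfl)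
      · have e1 := IHδ _ (nadd_lt_nadd_left hr₂ r) c c' r r₂ rfl rfl hr (hr₂.trans hr')
        have : x ≤ (p * c + r) ♯ (p * c' + r₂) := by
          calc x = p * (c ♯ c') + (x - p * (c ♯ c')) := hx2.symm
            _ ≤ p * (c ♯ c') + (r ♯ r₂) := add_le_add le_rfl ht'
            _ = (p * c + r) ♯ (p * c' + r₂) := e1.symm
        exact this.trans_lt (nadd_lt_nadd_of_le_of_lt le_rfl (add_lt_add_right hr₂ _))

open Ordinal NaturalOps in
/-- `ω ^ ξ` is closed under natural addition. -/
theorem nadd_lt_omega0_opow : ∀ {ξ a b : Ordinal.{0}},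
    a < Ordinal.omega0 ^ ξ → b < Ordinal.omega0 ^ ξ → a ♯ b < Ordinal.omega0 ^ ξ := by
  intro ξ
  induction ξ using Ordinal.induction with
  | _ ξ IH =>
  intro a b ha hb
  rcases Ordinal.zero_or_succ_or_isSuccLimit ξ with rfl | ⟨η, rfl⟩ | hlim
  · rw [Ordinal.opow_zero, Ordinal.lt_one_iff_zero] at *
    subst ha; subst hb; simp
  · have hne : (Ordinal.omega0 : Ordinal) ^ η ≠ 0 := Ordinal.opow_ne_zero η omega0_ne_zero
    have hcl : ∀ x y, x < Ordinal.omega0 ^ η → y < Ordinal.omega0 ^ η →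
        x ♯ y < Ordinal.omega0 ^ η := fun x y hx hy => IH η (Order.lt_succ η) hx hy
    rw [Ordinal.opow_succ] at ha hb ⊢
    have hm : a / Ordinal.omega0 ^ η < Ordinal.omega0 := (Ordinal.div_lt hne).2 ha
    have hk : b / Ordinal.omega0 ^ η < Ordinal.omega0 := (Ordinal.div_lt hne).2 hb
    have hmk : a / Ordinal.omega0 ^ η ♯ b / Ordinal.omega0 ^ η < Ordinal.omega0 := by
      obtain ⟨m, hm'⟩ := Ordinal.lt_omega0.1 hm
      obtain ⟨k, hk'⟩ := Ordinal.lt_omega0.1 hk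
      rw [hm', hk', nadd_nat, ← Nat.cast_add]
      exact Ordinal.nat_lt_omega0 _
    calc a ♯ b
        = (Ordinal.omega0 ^ η * (a / Ordinal.omega0 ^ η) + a % Ordinal.omega0 ^ η)
          ♯ (Ordinal.omega0 ^ η * (b / Ordinal.omega0 ^ η) + b % Ordinal.omega0 ^ η) := by
          rw [Ordinal.div_add_mod, Ordinal.div_add_mod]
      _ = Ordinal.omega0 ^ η * (a / Ordinal.omega0 ^ η ♯ b / Ordinal.omega0 ^ η)
          + (a % Ordinal.omega0 ^ η ♯ b % Ordinal.omega0 ^ η) :=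
          keyB_aux hcl _ _ _ _ (Ordinal.mod_lt a hne) (Ordinal.mod_lt b hne)
      _ < Ordinal.omega0 ^ η * (a / Ordinal.omega0 ^ η ♯ b / Ordinal.omega0 ^ η)
          + Ordinal.omega0 ^ η :=
          add_lt_add_right (hcl _ _ (Ordinal.mod_lt a hne) (Ordinal.mod_lt b hne)) _
      _ = Ordinal.omega0 ^ η * Order.succ (a / Ordinal.omega0 ^ η ♯ b / Ordinal.omega0 ^ η) :=
          (Ordinal.mul_succ _ _).symm
      _ ≤ Ordinal.omega0 ^ η * Ordinal.omega0 :=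
          mul_le_mul_right (Order.succ_le_of_lt hmk) _
  · obtain ⟨η₁, hη₁, ha'⟩ := (Ordinal.lt_opow_of_isSuccLimit omega0_ne_zero hlim).1 ha
    obtain ⟨η₂, hη₂, hb'⟩ := (Ordinal.lt_opow_of_isSuccLimit omega0_ne_zero hlim).1 hb
    have h1 : a < Ordinal.omega0 ^ (η₁ ⊔ η₂) :=
      ha'.trans_le (Ordinal.opow_le_opow_right omega0_pos le_sup_left)
    have h2 : b < Ordinal.omega0 ^ (η₁ ⊔ η₂) :=
      hb'.trans_le (Ordinal.opow_le_opow_right omega0_pos le_sup_right)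
    exact (IH _ (max_lt hη₁ hη₂) h1 h2).trans_le
      (Ordinal.opow_le_opow_right omega0_pos (max_lt hη₁ hη₂).le)

theorem one_lt_Omega1 : 1 < Omega1 := by
  have : (Ordinal.omega0 : Ordinal) < Omega1 := by
    rw [← Cardinal.ord_aleph0, Omega1]
    exact Cardinal.ord_lt_ord.2 (by simpa using Cardinal.aleph0_lt_aleph_one)
  exact Ordinal.one_lt_omega0.trans this

theorem omega0_lt_Omega1 : Ordinal.omega0 < Omega1 := by
  rw [← Cardinal.ord_aleph0, Omega1]
  exact Cardinal.ord_lt_ord.2 (by simpa using Cardinal.aleph0_lt_aleph_one)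

theorem opow_lt_Omega1 : ∀ {η : Ordinal.{0}}, η < Omega1 → Ordinal.omega0 ^ η < Omega1 := by
  intro η
  induction η using Ordinal.induction with
  | _ η IH =>
  intro hη
  rcases Ordinal.zero_or_succ_or_isSuccLimit η with rfl | ⟨η', rfl⟩ | hlim
  · simpa using one_lt_Omega1
  · rw [Ordinal.opow_succ, Omega1, Cardinal.lt_ord, Ordinal.card_mul]
    have h1 : (Ordinal.omega0 ^ η').card < Cardinal.aleph 1 := by
      rw [← Cardinal.lt_ord]
      exact IH η' (Order.lt_succ η') ((Order.lt_succ η').trans hη)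
    have h2 : (Ordinal.omega0).card < Cardinal.aleph 1 := by
      rw [← Cardinal.lt_ord]; exact omega0_lt_Omega1
    exact Cardinal.mul_lt_of_lt (Cardinal.aleph0_le_aleph 1) h1 h2
  · rw [Omega1, Cardinal.lt_ord]
    have h1 : η.card < Cardinal.aleph 1 := by rw [← Cardinal.lt_ord]; exact hη
    exact (Ordinal.card_opow_le_of_omega0_le_left le_rfl η).trans_lt
      (max_lt (by simpa using Cardinal.aleph0_lt_aleph_one) h1)

theorem omega0_opow_Omega1 : Ordinal.omega0 ^ Omega1 = Omega1 := by
  apply le_antisymm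
  · apply (Ordinal.opow_le_of_isSuccLimit Ordinal.omega0_ne_zero _).2
    · exact fun η hη => (opow_lt_Omega1 hη).le
    · exact Cardinal.isSuccLimit_ord (Cardinal.aleph0_le_aleph 1)
  · exact Ordinal.right_le_opow _ Ordinal.one_lt_omega0

open NaturalOps in
theorem nadd_lt_Omega1_opow {L a b : Ordinal.{0}} (ha : a < Omega1 ^ L) (hb : b < Omega1 ^ L) :
    a ♯ b < Omega1 ^ L := by
  have h : Omega1 ^ L = Ordinal.omega0 ^ (Omega1 * L) := by
    rw [Ordinal.opow_mul, omega0_opow_Omega1]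
  rw [h] at ha hb ⊢
  exact nadd_lt_omega0_opow ha hb

open NaturalOps in
theorem nadd_lt_Omega1 {a b : Ordinal.{0}} (ha : a < Omega1) (hb : b < Omega1) :
    a ♯ b < Omega1 := by
  rw [← omega0_opow_Omega1] at *
  exact nadd_lt_omega0_opow ha hb

theorem eps_eq : Ordinal.omega0 ^ epsOmega1 = epsOmega1 :=
  Ordinal.nfp_fp (Ordinal.isNormal_opow Ordinal.one_lt_omega0) _

open NaturalOps in
theorem nadd_lt_eps {a b : Ordinal.{0}} (ha : a < epsOmega1) (hb : b < epsOmega1) :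
    a ♯ b < epsOmega1 := by
  rw [← eps_eq] at *
  exact nadd_lt_omega0_opow ha hb

/-- The head of the base-`b` CNF of `b^L*c + r`. -/
theorem CNF_head {b L c r : Ordinal.{0}} (hb : 1 < b) (hc0 : c ≠ 0) (hcb : c < b)
    (hr : r < b ^ L) : Ordinal.CNF b (b ^ L * c + r) = (L, c) :: Ordinal.CNF b r := by
  have hbL : b ^ L ≠ 0 := Ordinal.opow_ne_zero L (zero_lt_one.trans hb).ne'
  have ho : b ^ L * c + r ≠ 0 := by
    have : b ^ L * c ≠ 0 := mul_ne_zero hbL hc0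
    exact ((pos_iff_ne_zero.2 this).trans_le (le_self_add)).ne'
  have hlog : Ordinal.log b (b ^ L * c + r) = L := by
    rw [Ordinal.log_opow_mul_add hb hc0 hr, Ordinal.log_eq_zero hcb, add_zero]
  rw [Ordinal.CNF.ne_zero ho, hlog, Ordinal.mul_add_div c hbL,
    Ordinal.div_eq_zero_of_lt hr, add_zero, Ordinal.mul_add_mod_self,
    Ordinal.mod_eq_of_lt hr]

theorem log_lt_self_of_lt_eps {α : Ordinal.{0}} (hα : α < epsOmega1) (h0 : α ≠ 0) :
    Ordinal.log Omega1 α < α := by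
  rcases lt_or_ge (Ordinal.log Omega1 α) α with h | h
  · exact h
  · exfalso
    have hlog : Ordinal.log Omega1 α = α := le_antisymm (Ordinal.log_le_self _ _) h
    have hΩα : Omega1 ^ α ≤ α := by
      conv_lhs => rw [← hlog]
      exact Ordinal.opow_log_le_self _ h0
    have hωα : Ordinal.omega0 ^ α ≤ α :=
      (Ordinal.opow_le_opow_left α omega0_lt_Omega1.le).trans hΩα
    have h1α : 1 ≤ α := Ordinal.one_le_iff_ne_zero.2 h0
    have hΩle : Omega1 ≤ α := by
      calc Omega1 = Omega1 ^ (1 : Ordinal) := (Ordinal.opow_one _).symm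
        _ ≤ Omega1 ^ α := Ordinal.opow_le_opow_right (zero_lt_one.trans one_lt_Omega1) h1α
        _ ≤ α := hΩα
    have hΩlt : Omega1 < α := by
      rcases hΩle.lt_or_eq with h' | h'
      · exact h'
      · exfalso
        subst h'
        have : Omega1 ^ (1:Ordinal) < Omega1 ^ Omega1 :=
          (Ordinal.opow_lt_opow_iff_right one_lt_Omega1).2 one_lt_Omega1
        rw [Ordinal.opow_one] at this
        exact absurd hΩα this.not_ge
    have : epsOmega1 ≤ α := by
      apply Ordinal.nfp_le_fp (Ordinal.isNormal_opow Ordinal.one_lt_omega0).strictMono.monotone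
      · rwa [Ordinal.add_one_eq_succ, Order.succ_le_iff]
      · exact hωα
    exact absurd hα this.not_gt

theorem mem_CNF_snd_le : ∀ {α e c : Ordinal.{0}}, (e, c) ∈ Ordinal.CNF Omega1 α → c ≤ α := by
  intro α
  induction α using Ordinal.induction with
  | _ α IH =>
  intro e c hmem
  rcases eq_or_ne α 0 with rfl | h0
  · simp [Ordinal.CNF.zero_right] at hmem
  · rw [Ordinal.CNF.ne_zero h0] at hmem
    rcases List.mem_cons.1 hmem with h | h
    · have hc : c = α / Omega1 ^ Ordinal.log Omega1 α := congrArg Prod.snd h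
      subst hc
      have h1 : (1:Ordinal) ≤ Omega1 ^ Ordinal.log Omega1 α :=
        Ordinal.one_le_iff_ne_zero.2 (Ordinal.opow_ne_zero _ (zero_lt_one.trans one_lt_Omega1).ne')
      calc α / Omega1 ^ Ordinal.log Omega1 α
          = 1 * (α / Omega1 ^ Ordinal.log Omega1 α) := (one_mul _).symm
        _ ≤ Omega1 ^ Ordinal.log Omega1 α * (α / Omega1 ^ Ordinal.log Omega1 α) :=
            mul_le_mul_left h1 _
        _ ≤ α := Ordinal.mul_div_le α _
    · have hlt := Ordinal.mod_opow_log_lt_self Omega1 h0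
      exact (IH _ hlt h).trans hlt.le

theorem KMem_le {γ α : Ordinal.{0}} (h : KMem γ α) : γ ≤ α := by
  induction h with
  | zero => exact le_rfl
  | coeff h => exact mem_CNF_snd_le h
  | expo h _ IH => exact IH.trans ((Ordinal.CNF.fst_le_log h).trans (Ordinal.log_le_self _ _))

theorem kmem_zero : ∀ {α : Ordinal.{0}}, α < epsOmega1 → KMem 0 α := by
  intro α
  induction α using Ordinal.induction with
  | _ α IH =>
  intro hα
  rcases eq_or_ne α 0 with rfl | h0
  · exact KMem.zero
  · have hlog := log_lt_self_of_lt_eps hα h0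
    exact KMem.expo (by rw [Ordinal.CNF.ne_zero h0]; exact List.mem_cons_self)
      (IH _ hlog (hlog.trans hα))

theorem KMem_zero_inv {γ : Ordinal.{0}} (h : KMem γ 0) : γ = 0 := by
  cases h with
  | zero => rfl
  | coeff hm => simp [Ordinal.CNF.zero_right] at hm
  | expo hm _ => simp [Ordinal.CNF.zero_right] at hm

theorem KMem_cons_forward {x L c r γ : Ordinal.{0}}
    (hx : Ordinal.CNF Omega1 x = (L, c) :: Ordinal.CNF Omega1 r) (h : KMem γ x) :
    γ = c ∨ KMem γ L ∨ KMem γ r := by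
  cases h with
  | zero => simp [Ordinal.CNF.zero_right] at hx
  | coeff hm =>
    rw [hx] at hm
    rcases List.mem_cons.1 hm with h | h
    · exact Or.inl (congrArg Prod.snd h)
    · exact Or.inr (Or.inr (KMem.coeff h))
  | expo hm hK =>
    rw [hx] at hm
    rcases List.mem_cons.1 hm with h | h
    · cases h
      exact Or.inr (Or.inl hK)
    · exact Or.inr (Or.inr (KMem.expo h hK))

theorem KMem_tail {x L c r γ : Ordinal.{0}}
    (hx : Ordinal.CNF Omega1 x = (L, c) :: Ordinal.CNF Omega1 r) (hL : KMem 0 L)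
    (h : KMem γ r) : KMem γ x := by
  cases h with
  | zero => exact KMem.expo (by rw [hx]; exact List.mem_cons_self) hL
  | coeff hm => exact KMem.coeff (by rw [hx]; exact List.mem_cons_of_mem _ hm)
  | expo hm hK => exact KMem.expo (by rw [hx]; exact List.mem_cons_of_mem _ hm) hK

open Ordinal NaturalOps in
theorem kmem_main : ∀ (o α β : Ordinal.{0}), α < epsOmega1 → β < epsOmega1 → α ♯ β = o →
    (∀ γ, KMem γ (α ♯ β) → ∃ γ₁ γ₂, KMem γ₁ α ∧ KMem γ₂ β ∧ γ ≤ γ₁ ♯ γ₂) ∧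
    (∀ γ, KMem γ α → ∃ γ', KMem γ' (α ♯ β) ∧ γ ≤ γ') := by
  intro o
  induction o using Ordinal.induction with
  | _ o IH =>
  intro α β hα hβ ho
  by_cases h00 : α ♯ β = 0
  · have hα0 : α = 0 := le_antisymm (h00 ▸ le_self_nadd) (zero_le : (0 : Ordinal) ≤ α)
    have hβ0 : β = 0 := le_antisymm (h00 ▸ le_nadd_self) (zero_le : (0 : Ordinal) ≤ β)
    subst hα0; subst hβ0
    constructor
    · intro γ hγ
      rw [h00] at hγ
      have hγ0 := KMem_zero_inv hγ
      exact ⟨0, 0, KMem.zero, KMem.zero, by simp [hγ0]⟩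
    · intro γ hγ
      have hγ0 := KMem_zero_inv hγ
      exact ⟨0, by rw [h00]; exact KMem.zero, hγ0.le⟩
  · have hp1 : (1:Ordinal) < Omega1 := one_lt_Omega1
    set L := Ordinal.log Omega1 α ⊔ Ordinal.log Omega1 β with hLdef
    have hbL : Omega1 ^ L ≠ 0 := Ordinal.opow_ne_zero L (zero_lt_one.trans hp1).ne'
    set c₁ := α / Omega1 ^ L with hc₁def
    set c₂ := β / Omega1 ^ L with hc₂def
    set r₁ := α % Omega1 ^ L with hr₁def
    set r₂ := β % Omega1 ^ L with hr₂def
    have hr₁ : r₁ < Omega1 ^ L := Ordinal.mod_lt α hbL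
    have hr₂ : r₂ < Omega1 ^ L := Ordinal.mod_lt β hbL
    have hd₁ : Omega1 ^ L * c₁ + r₁ = α := Ordinal.div_add_mod α _
    have hd₂ : Omega1 ^ L * c₂ + r₂ = β := Ordinal.div_add_mod β _
    have hc₁ : c₁ < Omega1 := by
      rw [hc₁def, Ordinal.div_lt hbL, ← Ordinal.opow_succ]
      exact (Ordinal.lt_opow_succ_log_self hp1 α).trans_le
        (Ordinal.opow_le_opow_right (zero_lt_one.trans hp1) (Order.succ_le_succ le_sup_left))
    have hc₂ : c₂ < Omega1 := by
      rw [hc₂def, Ordinal.div_lt hbL, ← Ordinal.opow_succ]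
      exact (Ordinal.lt_opow_succ_log_self hp1 β).trans_le
        (Ordinal.opow_le_opow_right (zero_lt_one.trans hp1) (Order.succ_le_succ le_sup_right))
    have hkey : α ♯ β = Omega1 ^ L * (c₁ ♯ c₂) + (r₁ ♯ r₂) := by
      conv_lhs => rw [← hd₁, ← hd₂]
      exact keyB_aux (fun a b ha hb => nadd_lt_Omega1_opow ha hb) _ _ _ _ hr₁ hr₂
    have hC : c₁ ♯ c₂ < Omega1 := nadd_lt_Omega1 hc₁ hc₂
    have hob : α ≠ 0 ∨ β ≠ 0 := by
      by_contra hcon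
      push_neg at hcon
      obtain ⟨h1, h2⟩ := hcon
      rw [h1, h2] at h00
      simp at h00
    have hc0 : c₁ ≠ 0 ∨ c₂ ≠ 0 := by
      rcases le_total (Ordinal.log Omega1 α) (Ordinal.log Omega1 β) with hl | hl
      · have hLβ : L = Ordinal.log Omega1 β := sup_eq_right.2 hl
        rcases eq_or_ne β 0 with rfl | hb0
        · have hA0 : α ≠ 0 := by
            rcases hob with h | h
            · exact h
            · exact absurd rfl h
          left
          have hL0 : L = 0 := by rw [hLβ, Ordinal.log_zero_right]
          rw [hc₁def, hL0, Ordinal.opow_zero, Ordinal.div_one]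
          exact hA0
        · right
          rw [hc₂def, hLβ]
          have hble : Omega1 ^ Ordinal.log Omega1 β ≤ β := Ordinal.opow_log_le_self Omega1 hb0
          exact ((Ordinal.div_pos
            (Ordinal.opow_ne_zero _ (zero_lt_one.trans hp1).ne')).2 hble).ne'
      · have hLα : L = Ordinal.log Omega1 α := sup_eq_left.2 hl
        rcases eq_or_ne α 0 with rfl | ha0
        · have hB0 : β ≠ 0 := by
            rcases hob with h | h
            · exact absurd rfl h
            · exact h
          right
          have hL0 : L = 0 := by rw [hLα, Ordinal.log_zero_right]
          rw [hc₂def, hL0, Ordinal.opow_zero, Ordinal.div_one]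
          exact hB0
        · left
          rw [hc₁def, hLα]
          have hble : Omega1 ^ Ordinal.log Omega1 α ≤ α := Ordinal.opow_log_le_self Omega1 ha0
          exact ((Ordinal.div_pos
            (Ordinal.opow_ne_zero _ (zero_lt_one.trans hp1).ne')).2 hble).ne'
    have hC0 : c₁ ♯ c₂ ≠ 0 := by
      rcases hc0 with h | h
      · exact fun hc => h (le_antisymm (hc ▸ le_self_nadd) zero_le)
      · exact fun hc => h (le_antisymm (hc ▸ le_nadd_self) zero_le)
    have hR : r₁ ♯ r₂ < Omega1 ^ L := nadd_lt_Omega1_opow hr₁ hr₂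
    have hCNFo : Ordinal.CNF Omega1 (α ♯ β) = (L, c₁ ♯ c₂) :: Ordinal.CNF Omega1 (r₁ ♯ r₂) := by
      rw [hkey]
      exact CNF_head hp1 hC0 hC hR
    have hLeps : L < epsOmega1 :=
      max_lt ((Ordinal.log_le_self _ _).trans_lt hα) ((Ordinal.log_le_self _ _).trans_lt hβ)
    have hkL : KMem 0 L := kmem_zero hLeps
    have hRo : r₁ ♯ r₂ < o := by
      rw [← ho, hkey]
      calc r₁ ♯ r₂ < Omega1 ^ L := hR
        _ ≤ Omega1 ^ L * (c₁ ♯ c₂) := by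
            conv_lhs => rw [← mul_one (Omega1 ^ L)]
            exact mul_le_mul_right (Ordinal.one_le_iff_ne_zero.2 hC0) _
        _ ≤ _ := le_self_add
    have hIH := IH _ hRo r₁ r₂ ((Ordinal.mod_le α _).trans_lt hα)
      ((Ordinal.mod_le β _).trans_lt hβ) rfl
    have emb : ∀ (x cx rx : Ordinal.{0}), x < epsOmega1 → Omega1 ^ L * cx + rx = x →
        cx < Omega1 → rx < Omega1 ^ L →
        (∃ γ₁, KMem γ₁ x ∧ cx ≤ γ₁) ∧ (∀ γ, KMem γ rx → KMem γ x) := by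
      intro x cx rx hx hdx hcx hrx
      rcases eq_or_ne cx 0 with rfl | hcx0
      · have hrxx : rx = x := by simpa using hdx
        subst hrxx
        exact ⟨⟨0, kmem_zero hx, le_rfl⟩, fun γ h => h⟩
      · have hcnf : Ordinal.CNF Omega1 x = (L, cx) :: Ordinal.CNF Omega1 rx := by
          rw [← hdx]
          exact CNF_head hp1 hcx0 hcx hrx
        exact ⟨⟨cx, KMem.coeff (by rw [hcnf]; exact List.mem_cons_self), le_rfl⟩,
          fun γ h => KMem_tail hcnf hkL h⟩
    have embα := emb α c₁ r₁ hα hd₁ hc₁ hr₁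
    have embβ := emb β c₂ r₂ hβ hd₂ hc₂ hr₂
    refine ⟨?_, ?_⟩
    · intro γ hγ
      rcases KMem_cons_forward hCNFo hγ with rfl | hL | hRm
      · obtain ⟨γ₁, h1, h1'⟩ := embα.1
        obtain ⟨γ₂, h2, h2'⟩ := embβ.1
        exact ⟨γ₁, γ₂, h1, h2, nadd_le_nadd h1' h2'⟩
      · rcases hc0 with h | h
        · have hcnfα : Ordinal.CNF Omega1 α = (L, c₁) :: Ordinal.CNF Omega1 r₁ := by
            rw [← hd₁]; exact CNF_head hp1 h hc₁ hr₁
          exact ⟨γ, 0, KMem.expo (by rw [hcnfα]; exact List.mem_cons_self) hL,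
            kmem_zero hβ, (nadd_zero γ).ge⟩
        · have hcnfβ : Ordinal.CNF Omega1 β = (L, c₂) :: Ordinal.CNF Omega1 r₂ := by
            rw [← hd₂]; exact CNF_head hp1 h hc₂ hr₂
          exact ⟨0, γ, kmem_zero hα,
            KMem.expo (by rw [hcnfβ]; exact List.mem_cons_self) hL, (zero_nadd γ).ge⟩
      · obtain ⟨γ₁, γ₂, h1, h2, h3⟩ := hIH.1 γ hRm
        exact ⟨γ₁, γ₂, embα.2 γ₁ h1, embβ.2 γ₂ h2, h3⟩
    · intro γ hγ
      rcases eq_or_ne c₁ 0 with h | h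
      · have hrα : r₁ = α := by
          rw [h] at hd₁
          simpa using hd₁
        obtain ⟨γ', h1, h2⟩ := hIH.2 γ (by rw [hrα]; exact hγ)
        exact ⟨γ', KMem_tail hCNFo hkL h1, h2⟩
      · have hcnfα : Ordinal.CNF Omega1 α = (L, c₁) :: Ordinal.CNF Omega1 r₁ := by
          rw [← hd₁]; exact CNF_head hp1 h hc₁ hr₁
        rcases KMem_cons_forward hcnfα hγ with rfl | hL | hRm
        · exact ⟨c₁ ♯ c₂, KMem.coeff (by rw [hCNFo]; exact List.mem_cons_self),
            le_self_nadd⟩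
        · exact ⟨γ, KMem.expo (by rw [hCNFo]; exact List.mem_cons_self) hL, le_rfl⟩
        · obtain ⟨γ', h1, h2⟩ := hIH.2 γ hRm
          exact ⟨γ', KMem_tail hCNFo hkL h1, h2⟩

open NaturalOps in
/-- coefficient bounds for natural sums:
`k(α ⊕ β) ≤ k(α) ⊕ k(β)`, and `k(α), k(β) ≤ k(α ⊕ β)`. -/
theorem stmt9 (α β : Ordinal.{0}) (hα : α < epsOmega1) (hβ : β < epsOmega1) :
    kMax (α ♯ β) ≤ kMax α ♯ kMax β ∧
    kMax α ≤ kMax (α ♯ β) ∧ kMax β ≤ kMax (α ♯ β) := by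
  have bdd : ∀ δ : Ordinal.{0}, BddAbove {γ | KMem γ δ} :=
    fun δ => ⟨δ, fun γ h => KMem_le h⟩
  have hαβ : α ♯ β < epsOmega1 := nadd_lt_eps hα hβ
  simp only [kMax]
  refine ⟨?_, ?_, ?_⟩
  · refine csSup_le ⟨0, show KMem 0 (α ♯ β) from kmem_zero hαβ⟩ ?_
    intro γ hγ
    obtain ⟨γ₁, γ₂, h1, h2, h3⟩ := (kmem_main _ α β hα hβ rfl).1 γ hγ
    exact h3.trans (Ordinal.nadd_le_nadd (le_csSup (bdd α) h1) (le_csSup (bdd β) h2))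
  · refine csSup_le ⟨0, show KMem 0 α from kmem_zero hα⟩ ?_
    intro γ hγ
    obtain ⟨γ', h1, h2⟩ := (kmem_main _ α β hα hβ rfl).2 γ hγ
    exact h2.trans (le_csSup (bdd _) h1)
  · refine csSup_le ⟨0, show KMem 0 β from kmem_zero hβ⟩ ?_
    intro γ hγ
    obtain ⟨γ', h1, h2⟩ := (kmem_main _ β α hβ hα rfl).2 γ hγ
    rw [Ordinal.nadd_comm β α] at h1
    exact h2.trans (le_csSup (bdd _) h1)
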